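/- Let n ≥ 1, x ∈ ℝ^n, t ∈ ℝ, and y > 0. Then y·log( Σ_{i=1}^n exp(x_i/y) ) ≤ t if and only if there exists u ∈ ℝ^n with Σ_{i=1}^n u_i ≤ y and (u_i, y, x_i − t) ∈ K_exp for every i (equivalently u_i ≥ y·exp((x_i − t)/y) for every i). This is the conic representation of the perspective of the log-sum-exp function. -/

import Mathlib

/-- The exponential cone `K_exp ⊆ ℝ³`. -/
def expCone : Set (ℝ × ℝ × ℝ) :=
  {z : ℝ × ℝ × ℝ | 0 < z.2.1 ∧ z.2.1 * Real.exp (z.2.2 / z.2.1) ≤ z.1} ∪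
    {z : ℝ × ℝ × ℝ | 0 ≤ z.1 ∧ z.2.1 = 0 ∧ z.2.2 ≤ 0}

/-- Conic representation of the perspective of log-sum-exp:
for `y > 0`, `y · log (Σ i, exp (x i / y)) ≤ t` iff there is `u` with
`Σ i, u i ≤ y` and `(u i, y, x i - t) ∈ K_exp` for every `i`. -/
theorem perspective_logSumExp_iff_expCone
    (n : ℕ) (hn : 1 ≤ n) (x : Fin n → ℝ) (t y : ℝ) (hy : 0 < y) :
    y * Real.log (∑ i : Fin n, Real.exp (x i / y)) ≤ t ↔
      ∃ u : Fin n → ℝ, (∑ i : Fin n, u i) ≤ y ∧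
        ∀ i : Fin n, (u i, y, x i - t) ∈ expCone := by
  have hne : Nonempty (Fin n) := Fin.pos_iff_nonempty.mp hn
  set S : ℝ := ∑ i : Fin n, Real.exp (x i / y) with hS
  have hSpos : 0 < S :=
    Finset.sum_pos (fun i _ => Real.exp_pos _) Finset.univ_nonempty
  -- key equivalence: y * log S ≤ t ↔ ∑ y * exp((x i - t)/y) ≤ y
  have key : y * Real.log S ≤ t ↔
      (∑ i : Fin n, y * Real.exp ((x i - t) / y)) ≤ y := by
    have hsum : (∑ i : Fin n, y * Real.exp ((x i - t) / y))
        = y * Real.exp (-t / y) * S := by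
      rw [hS, Finset.mul_sum]
      refine Finset.sum_congr rfl fun i _ => ?_
      rw [mul_assoc, ← Real.exp_add]
      ring_nf
    rw [hsum]
    have h1 : y * Real.log S ≤ t ↔ Real.log S ≤ t / y := by
      rw [mul_comm, ← le_div_iff₀ hy]
    rw [h1, Real.log_le_iff_le_exp hSpos]
    constructor
    · intro h
      calc y * Real.exp (-t / y) * S ≤ y * Real.exp (-t / y) * Real.exp (t / y) := by
            apply mul_le_mul_of_nonneg_left h
            positivity
        _ = y := by rw [mul_assoc, ← Real.exp_add, neg_div, neg_add_cancel, Real.exp_zero, mul_one]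
    · intro h
      have h2 : Real.exp (-t / y) * S ≤ 1 := by
        rw [← mul_le_mul_iff_right₀ hy, mul_one, ← mul_assoc]; exact h
      have h3 : Real.exp (-t / y) * Real.exp (t / y) = 1 := by
        rw [← Real.exp_add]; ring_nf; exact Real.exp_zero
      nlinarith [Real.exp_pos (t / y), Real.exp_pos (-t / y)]
    -- end
  constructor
  · intro h
    refine ⟨fun i => y * Real.exp ((x i - t) / y), key.mp h, fun i => ?_⟩
    exact Or.inl ⟨hy, le_refl _⟩
  · rintro ⟨u, hsum, hcone⟩
    apply key.mpr
    refine le_trans (Finset.sum_le_sum fun i _ => ?_) hsum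
    rcases hcone i with ⟨_, h⟩ | ⟨_, h0, _⟩
    · exact h
    · exact absurd h0 hy.ne'
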